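/- Let Φ ∈ S₂(E, E_*) and let K be a closed subspace of K_Φ with an orthogonal direct sum decomposition K = ⊕_{j=1}^∞ K_j. Let H_K denote the operator range of V*|_K. Then the reproducing kernel of H_K at (z, w) is V* P_K V D_{Φ*}² k_w(z), and it equals the sum of the reproducing kernels of the spaces H_{K_j}. -/

import Mathlib

open scoped ComplexInnerProductSpace

/-- Key Hilbert-space lemma: if `K` is the closure of the span of a mutually orthogonal
family of complete subspaces `Kj`, then the projections onto the `Kj` sum up to the
projection onto `K`. -/
lemma hasSum_orthogonalProjection_of_iSup {KH : Type*}
    [NormedAddCommGroup KH] [InnerProductSpace ℂ KH] [CompleteSpace KH]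
    (K : Submodule ℂ KH) [CompleteSpace K]
    (Kj : ℕ → Submodule ℂ KH) [∀ n, CompleteSpace (Kj n)]
    (hKjK : ∀ n, Kj n ≤ K)
    (hKjorth : ∀ m n, m ≠ n → ∀ x ∈ Kj m, ∀ y ∈ Kj n, ⟪x, y⟫ = 0)
    (hKsup : K = (⨆ n, Kj n).topologicalClosure) (u : KH) :
    HasSum (fun n : ℕ => ((Submodule.orthogonalProjectionOnto (Kj n) u : Kj n) : KH))
      ((Submodule.orthogonalProjectionOnto K u : K) : KH) := by
  classical
  set f : ∀ n : ℕ, Kj n := fun n => Submodule.orthogonalProjectionOnto (Kj n) u with hf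
  have hV : OrthogonalFamily ℂ (fun n => Kj n) (fun n => (Kj n).subtypeₗᵢ) :=
    fun m n hmn x y => hKjorth m n hmn x x.2 y y.2
  -- each term satisfies ⟪u, f n⟫ = ‖f n‖²
  have hterm : ∀ n : ℕ, ⟪u, ((f n : KH))⟫ = (‖(f n : KH)‖ : ℂ) ^ 2 := by
    intro n
    have h0 : ⟪u - ((f n : KH)), ((f n : KH))⟫ = 0 :=
      Submodule.starProjection_inner_eq_zero u _ (f n).2
    rw [inner_sub_left, sub_eq_zero] at h0
    rw [h0, inner_self_eq_norm_sq_to_K]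
    norm_cast
  -- Bessel inequality: partial sums of ‖f n‖² are bounded by ‖u‖²
  have hbessel : ∀ s : Finset ℕ, ∑ n ∈ s, ‖f n‖ ^ 2 ≤ ‖u‖ ^ 2 := by
    intro s
    set Ts : KH := ∑ n ∈ s, ((f n : KH)) with hTs
    have hnorm : ‖Ts‖ ^ 2 = ∑ n ∈ s, ‖f n‖ ^ 2 := hV.norm_sum f s
    have hinner : ⟪u, Ts⟫ = ((∑ n ∈ s, ‖f n‖ ^ 2 : ℝ) : ℂ) := by
      rw [hTs, inner_sum]
      push_cast
      exact Finset.sum_congr rfl fun n _ => hterm n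
    have hCS : ‖⟪u, Ts⟫‖ ≤ ‖u‖ * ‖Ts‖ := norm_inner_le_norm u Ts
    have hSnonneg : (0 : ℝ) ≤ ∑ n ∈ s, ‖f n‖ ^ 2 :=
      Finset.sum_nonneg fun n _ => sq_nonneg _
    rw [hinner, Complex.norm_real, Real.norm_eq_abs, abs_of_nonneg hSnonneg] at hCS
    nlinarith [norm_nonneg u, norm_nonneg Ts, sq_nonneg (‖u‖ - ‖Ts‖)]
  have hsummable : Summable fun n : ℕ => ((f n : KH)) := by
    rw [show (fun n : ℕ => ((f n : KH))) = fun n => (Kj n).subtypeₗᵢ (f n) from rfl,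
      hV.summable_iff_norm_sq_summable]
    exact summable_of_sum_le (fun n => sq_nonneg _) hbessel
  obtain ⟨T, hT⟩ := hsummable
  -- T ∈ K
  have hKclosed : IsClosed (K : Set KH) :=
    (completeSpace_coe_iff_isComplete.mp ‹_›).isClosed
  have hTmem : T ∈ K := by
    refine hKclosed.mem_of_tendsto hT (Filter.Eventually.of_forall fun s => ?_)
    exact Submodule.sum_mem K fun n _ => hKjK n (f n).2
  -- u - T is orthogonal to each Kj m
  have horthKj : ∀ m : ℕ, ∀ x ∈ Kj m, ⟪x, u - T⟫ = 0 := by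
    intro m x hx
    have hxsum : HasSum (fun n : ℕ => ⟪x, ((f n : KH))⟫) ⟪x, T⟫ :=
      hT.mapL (innerSL ℂ x)
    have hxsum' : HasSum (fun n : ℕ => ⟪x, ((f n : KH))⟫) ⟪x, u⟫ := by
      have : (fun n : ℕ => ⟪x, ((f n : KH))⟫) =
          fun n => if n = m then ⟪x, u⟫ else 0 := by
        funext n
        split_ifs with h
        · subst h
          have h0 : ⟪u - ((f n : KH)), x⟫ = 0 :=
            Submodule.starProjection_inner_eq_zero u x hx
          rw [inner_sub_left, sub_eq_zero] at h0
          rw [← inner_conj_symm, ← h0, inner_conj_symm]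
        · exact hKjorth m n (Ne.symm h) x hx _ (f n).2
      rw [this]
      exact hasSum_ite_eq m ⟪x, u⟫
    have : ⟪x, T⟫ = ⟪x, u⟫ := hxsum.unique hxsum'
    rw [inner_sub_right, this, sub_self]
  -- hence u - T is orthogonal to all of K
  have horthK : ∀ w ∈ K, ⟪u - T, w⟫ = 0 := by
    have hker : K ≤ LinearMap.ker ((innerSL ℂ (u - T) : KH →L[ℂ] ℂ) : KH →ₗ[ℂ] ℂ) := by
      rw [hKsup]
      have hclosed : IsClosed ((LinearMap.ker ((innerSL ℂ (u - T) : KH →L[ℂ] ℂ) : KH →ₗ[ℂ] ℂ)) : Set KH) :=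
        ContinuousLinearMap.isClosed_ker _
      have hle : (⨆ n, Kj n) ≤ LinearMap.ker ((innerSL ℂ (u - T) : KH →L[ℂ] ℂ) : KH →ₗ[ℂ] ℂ) := by
        refine iSup_le fun m x hx => ?_
        have := horthKj m x hx
        simp only [LinearMap.mem_ker, ContinuousLinearMap.coe_coe, innerSL_apply_apply]
        rw [← inner_conj_symm, this, map_zero]
      exact (⨆ n, Kj n).topologicalClosure_minimal hle hclosed
    intro w hw
    exact hker hw
  have hproj : ((Submodule.orthogonalProjectionOnto K u : K) : KH) = T :=
    Submodule.eq_starProjection_of_mem_of_inner_eq_zero hTmem horthK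
  rw [hproj]
  exact hT

theorem stmt_12 {Estar H KH : Type*}
    [NormedAddCommGroup Estar] [InnerProductSpace ℂ Estar] [CompleteSpace Estar]
    [NormedAddCommGroup H] [InnerProductSpace ℂ H] [CompleteSpace H]
    [NormedAddCommGroup KH] [InnerProductSpace ℂ KH] [CompleteSpace KH]
    (bidisk : Set (ℂ × ℂ)) (hbidisk : bidisk = {z : ℂ × ℂ | ‖z.1‖ < 1 ∧ ‖z.2‖ < 1})
    -- H_Φ as an RKHS on the bidisk, with kernel elements κ w v = D_{Φ*}² k_w v:
    (ev : H →ₗ[ℂ] (ℂ × ℂ) → Estar) (hev : Function.Injective ev)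
    (κ : (ℂ × ℂ) → Estar → H)
    (hrep : ∀ (f : H), ∀ w ∈ bidisk, ∀ v : Estar, ⟪κ w v, f⟫ = ⟪v, ev f w⟫)
    -- the canonical isometry V : H_Φ → K_Φ ⊆ scattering space:
    (V : H →L[ℂ] KH) (hV : ∀ x : H, ‖V x‖ = ‖x‖)
    -- K, a closed subspace of K_Φ, with orthogonal decomposition K = ⊕_j K_j:
    (K : Submodule ℂ KH) [CompleteSpace K]
    (Kj : ℕ → Submodule ℂ KH) [∀ n, CompleteSpace (Kj n)]
    (hKjK : ∀ n, Kj n ≤ K)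
    (hKjorth : ∀ m n, m ≠ n → ∀ x ∈ Kj m, ∀ y ∈ Kj n, ⟪x, y⟫ = 0)
    (hKsup : K = (⨆ n, Kj n).topologicalClosure)
    -- the H_K inner product: the operator-range inner product of A = V* P_K:
    (ipK : H → H → ℂ)
    (hipK : ∀ x y : KH,
      x ∈ (LinearMap.ker ((ContinuousLinearMap.adjoint V ∘L
            (K.subtypeL ∘L Submodule.orthogonalProjectionOnto K) : KH →ₗ[ℂ] H)))ᗮ →
      ipK (ContinuousLinearMap.adjoint V ((Submodule.orthogonalProjectionOnto K x : K) : KH))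
          (ContinuousLinearMap.adjoint V ((Submodule.orthogonalProjectionOnto K y : K) : KH)) = ⟪x, y⟫) :
    -- (1) the reproducing kernel of H_K is V* P_K V D²k_w:
    (∀ (x : KH), ∀ w ∈ bidisk, ∀ v : Estar,
        ipK (ContinuousLinearMap.adjoint V ((Submodule.orthogonalProjectionOnto K (V (κ w v)) : K) : KH))
            (ContinuousLinearMap.adjoint V ((Submodule.orthogonalProjectionOnto K x : K) : KH)) =
          ⟪v, ev (ContinuousLinearMap.adjoint V ((Submodule.orthogonalProjectionOnto K x : K) : KH)) w⟫) ∧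
      -- (2) it is the sum of the reproducing kernels of the H_{K_j}:
      ∀ w ∈ bidisk, ∀ v : Estar,
        HasSum
          (fun n : ℕ =>
            ContinuousLinearMap.adjoint V ((Submodule.orthogonalProjectionOnto (Kj n) (V (κ w v)) : Kj n) : KH))
          (ContinuousLinearMap.adjoint V ((Submodule.orthogonalProjectionOnto K (V (κ w v)) : K) : KH)) := by
  constructor
  · intro x w hw v
    set u : KH := V (κ w v) with hu
    set p : KH := ((Submodule.orthogonalProjectionOnto K u : K) : KH) with hp
    have hmem : p ∈ (LinearMap.ker ((ContinuousLinearMap.adjoint V ∘L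
        (K.subtypeL ∘L Submodule.orthogonalProjectionOnto K) : KH →ₗ[ℂ] H)))ᗮ := by
      rw [Submodule.mem_orthogonal]
      intro y hy
      have hy0 : ContinuousLinearMap.adjoint V ((Submodule.orthogonalProjectionOnto K y : K) : KH) = 0 := by
        simpa using hy
      have h1 : ⟪y, p⟫ = ⟪((Submodule.orthogonalProjectionOnto K y : K) : KH), u⟫ := by
        rw [hp]
        exact (Submodule.inner_starProjection_left_eq_right K y u).symm
      rw [h1, hu, ← ContinuousLinearMap.adjoint_inner_left, hy0, inner_zero_left]
    have h := hipK p x hmem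
    have hpp : ((Submodule.orthogonalProjectionOnto K p : K) : KH) = p := by
      rw [hp]
      rw [Submodule.orthogonalProjectionOnto_mem_subspace_eq_self]
    rw [hpp] at h
    rw [hp] at h ⊢
    rw [h]
    have h2 : ⟪p, x⟫ = ⟪u, ((Submodule.orthogonalProjectionOnto K x : K) : KH)⟫ := by
      rw [hp]
      exact Submodule.inner_starProjection_left_eq_right K u x
    rw [hp] at h2
    rw [h2, hu, ← ContinuousLinearMap.adjoint_inner_right]
    exact hrep _ w hw v
  · intro w hw v
    exact (hasSum_orthogonalProjection_of_iSup K Kj hKjK hKjorth hKsup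
      (V (κ w v))).mapL (ContinuousLinearMap.adjoint V)
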